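/- Let A ⊂ ℤ≥0 finite with 0 ∈ A, N = #A ≥ 2. Suppose A(x) = Σ_{a∈A} x^a has a spectrum θ₁,...,θ_{N-1} and A(x) has fewer than 3N/2 − 1 roots of modulus 1. Then the numbers e^{2πiθⱼ} (j = 0,...,N-1, θ₀ = 0) are exactly the N-th roots of unity, i.e., θⱼ ∈ (1/N)ℤ, and 1 + x + ... + x^{N-1} divides A(x). -/

import Mathlib

set_option maxHeartbeats 1000000

open Polynomial Complex Finset Pointwise


lemma freiman_step (B : Finset ℂ) (hB0 : ∀ b ∈ B, b ≠ 0)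
    (hcard : 2 * (B / B).card < 3 * B.card) {x : ℂ} (hx : x ∈ B / B) :
    B.card < 2 * (B ∩ B.image (x * ·)).card := by
  obtain ⟨a, ha, b, hb, rfl⟩ := Finset.mem_div.1 hx
  have ha0 := hB0 a ha
  have hb0 := hB0 b hb
  have hsub : B ∪ B.image ((a / b) * ·) ⊆ (B / B).image (a * ·) := by
    intro c hc
    rcases Finset.mem_union.1 hc with h | h
    · exact Finset.mem_image.2 ⟨c / a, Finset.mem_div.2 ⟨c, h, a, ha, rfl⟩,
        by field_simp⟩
    · obtain ⟨d, hd, rfl⟩ := Finset.mem_image.1 h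
      exact Finset.mem_image.2 ⟨d / b, Finset.mem_div.2 ⟨d, hd, b, hb, rfl⟩,
        by field_simp⟩
  have h1 : (B ∪ B.image ((a / b) * ·)).card ≤ (B / B).card :=
    le_trans (Finset.card_le_card hsub) (Finset.card_image_le)
  have h2 : (B.image ((a / b) * ·)).card = B.card :=
    Finset.card_image_of_injective _ (mul_right_injective₀ (div_ne_zero ha0 hb0))
  have h3 := Finset.card_inter_add_card_union B (B.image ((a / b) * ·))
  omega

lemma freiman_mul (B : Finset ℂ) (hB0 : ∀ b ∈ B, b ≠ 0)
    (hcard : 2 * (B / B).card < 3 * B.card) {x y : ℂ}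
    (hx : x ∈ B / B) (hy : y ∈ B / B) : x * y ∈ B / B := by
  have hy0 : y ≠ 0 := by
    obtain ⟨a, ha, b, hb, rfl⟩ := Finset.mem_div.1 hy
    exact div_ne_zero (hB0 a ha) (hB0 b hb)
  have hyinv : y⁻¹ ∈ B / B := by
    obtain ⟨a, ha, b, hb, rfl⟩ := Finset.mem_div.1 hy
    exact Finset.mem_div.2 ⟨b, hb, a, ha, by rw [inv_div]⟩
  have hP := freiman_step B hB0 hcard hx
  have hQ := freiman_step B hB0 hcard hyinv
  set P := B ∩ B.image (x * ·) with hPdef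
  set Q := B ∩ B.image (y⁻¹ * ·) with hQdef
  have hPQ : (P ∩ Q).Nonempty := by
    by_contra h
    rw [Finset.not_nonempty_iff_eq_empty] at h
    have hun : (P ∪ Q).card ≤ B.card :=
      Finset.card_le_card (Finset.union_subset (Finset.inter_subset_left)
        (Finset.inter_subset_left))
    have := Finset.card_inter_add_card_union P Q
    rw [h] at this
    simp at this
    omega
  obtain ⟨c, hc⟩ := hPQ
  have hcP := Finset.mem_inter.1 (Finset.mem_inter.1 hc).1
  have hcQ := Finset.mem_inter.1 (Finset.mem_inter.1 hc).2
  obtain ⟨b₁, hb₁, hcb₁⟩ := Finset.mem_image.1 hcP.2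
  obtain ⟨d, hd, hcd⟩ := Finset.mem_image.1 hcQ.2
  have hb₁0 : b₁ ≠ 0 := hB0 b₁ hb₁
  refine Finset.mem_div.2 ⟨d, hd, b₁, hb₁, ?_⟩
  have hdc : d = y * c := by
    rw [← hcd]; field_simp
  rw [hdc, ← hcb₁]; field_simp

lemma pow_card_of_closed (S : Finset ℂ) (h1 : (1:ℂ) ∈ S) (h0 : ∀ s ∈ S, s ≠ 0)
    (hinv : ∀ s ∈ S, s⁻¹ ∈ S) (hmul : ∀ s ∈ S, ∀ t ∈ S, s * t ∈ S) :
    ∀ s ∈ S, s ^ S.card = 1 := by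
  classical
  set G : Subgroup ℂˣ :=
    { carrier := {u : ℂˣ | (u : ℂ) ∈ S}
      mul_mem' := fun {a b} ha hb => hmul _ ha _ hb
      one_mem' := h1
      inv_mem' := fun {a} ha => by
        show ((a⁻¹ : ℂˣ) : ℂ) ∈ S
        rw [Units.val_inv_eq_inv_val]
        exact hinv _ ha } with hG
  have hmemG : ∀ u : ℂˣ, u ∈ G ↔ (u : ℂ) ∈ S := fun u => Iff.rfl
  let e : G ≃ {x // x ∈ S} :=
    { toFun := fun u => ⟨(u : ℂˣ), u.2⟩
      invFun := fun s => ⟨Units.mk0 s.1 (h0 s.1 s.2), by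
        show ((Units.mk0 s.1 (h0 s.1 s.2) : ℂˣ) : ℂ) ∈ S
        simpa using s.2⟩
      left_inv := fun u => by
        ext
        simp
      right_inv := fun s => rfl }
  haveI : Fintype G := Fintype.ofEquiv _ e.symm
  have hcard : Fintype.card G = S.card := by
    rw [Fintype.card_congr e, Fintype.card_coe]
  intro s hs
  set u : G := ⟨Units.mk0 s (h0 s hs), hs⟩ with hu
  have hthis : u ^ S.card = 1 := by rw [← hcard]; exact pow_card_eq_one
  have h2 : ((u ^ S.card : G) : ℂˣ) = 1 := by rw [hthis]; rfl
  have h3 : ((u : ℂˣ) : ℂ) ^ S.card = 1 := by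
    rw [← Units.val_pow_eq_pow_val, ← SubmonoidClass.coe_pow, h2, Units.val_one]
  exact h3

lemma eq_nthRootsFinset (S : Finset ℂ) (hpos : 0 < S.card)
    (hpow : ∀ s ∈ S, s ^ S.card = 1) : S = nthRootsFinset S.card (1 : ℂ) := by
  refine Finset.eq_of_subset_of_card_le
    (fun s hs => (mem_nthRootsFinset hpos (1 : ℂ)).2 (hpow s hs)) ?_
  rw [(Complex.isPrimitiveRoot_exp _ hpos.ne').card_nthRootsFinset]

lemma geom_dvd_of_roots (m : ℕ) (hm : 0 < m) (p : ℂ[X]) (hp : p ≠ 0)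
    (hr : ∀ ζ : ℂ, ζ ^ m = 1 → ζ ≠ 1 → p.eval ζ = 0) :
    (∑ i ∈ Finset.range m, (X : ℂ[X]) ^ i) ∣ p := by
  classical
  set T := (nthRootsFinset m (1 : ℂ)).erase 1 with hT
  have h1mem : (1 : ℂ) ∈ nthRootsFinset m (1 : ℂ) := (mem_nthRootsFinset hm (1 : ℂ)).2 (one_pow m)
  have hprod : (X - C 1) * ∏ ζ ∈ T, (X - C ζ) = (X : ℂ[X]) ^ m - 1 := by
    rw [hT, Finset.mul_prod_erase (nthRootsFinset m (1 : ℂ)) (fun ζ => X - C ζ) h1mem,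
      ← X_pow_sub_one_eq_prod hm (Complex.isPrimitiveRoot_exp _ hm.ne')]
  have hgeom : (X - C 1) * (∑ i ∈ Finset.range m, (X : ℂ[X]) ^ i)
      = (X : ℂ[X]) ^ m - 1 := by
    rw [← geom_sum_mul (X : ℂ[X]) m, map_one]; ring
  have hXC : (X - C 1 : ℂ[X]) ≠ 0 := X_sub_C_ne_zero 1
  have heq : (∑ i ∈ Finset.range m, (X : ℂ[X]) ^ i) = ∏ ζ ∈ T, (X - C ζ) :=
    mul_left_cancel₀ hXC (by rw [hprod, hgeom])
  rw [heq]
  have hle : T.val ≤ p.roots := by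
    rw [Multiset.le_iff_subset T.nodup]
    intro ζ hζ
    have hζT : ζ ∈ T := hζ
    have hζ1 : ζ ≠ 1 := (Finset.mem_erase.1 hζT).1
    have hζm : ζ ^ m = 1 :=
      (mem_nthRootsFinset hm (1 : ℂ)).1 (Finset.mem_erase.1 hζT).2
    exact (mem_roots hp).2 (hr ζ hζm hζ1)
  calc (∏ ζ ∈ T, (X - C ζ)) = (T.val.map fun ζ => X - C ζ).prod := by
        rw [Finset.prod_eq_multiset_prod]
    _ ∣ (p.roots.map fun ζ => X - C ζ).prod :=
        Multiset.prod_dvd_prod_of_le (Multiset.map_le_map hle)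
    _ ∣ p := prod_multiset_X_sub_C_dvd p

theorem stmt12 (A : Finset ℕ) (h0A : 0 ∈ A) (N : ℕ) (hN : N = A.card) (hN2 : 2 ≤ N)
    (θ : Fin N → ℝ) (h0 : ∀ h : 0 < N, θ ⟨0, h⟩ = 0)
    (hinj : Function.Injective θ)
    (hIoo : ∀ j h, j ≠ ⟨0, h⟩ → θ j ∈ Set.Ioo (0 : ℝ) 1)
    (hspec : ∀ i j, i ≠ j →
      ∑ a ∈ A, Complex.exp (2 * Real.pi * Complex.I * (θ i - θ j)) ^ a = 0)
    (hroots : 2 * Set.ncard {z : ℂ | ‖z‖ = 1 ∧ ∑ a ∈ A, z ^ a = 0}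
        < 3 * N - 2) :
    (∀ j, ∃ k : ℤ, θ j = (k : ℝ) / N) ∧
    (∀ ζ : ℂ, ζ ^ N = 1 → ∃ j, ζ = Complex.exp (2 * Real.pi * Complex.I * θ j)) ∧
    (∑ i ∈ Finset.range N, (X : Polynomial ℤ) ^ i) ∣ ∑ a ∈ A, X ^ a := by
  classical
  have hNpos : 0 < N := by omega
  have hθ0 : θ ⟨0, hNpos⟩ = 0 := h0 hNpos
  have hrange : ∀ j, 0 ≤ θ j ∧ θ j < 1 := by
    intro j
    by_cases hj : j = ⟨0, hNpos⟩
    · rw [hj, hθ0]; exact ⟨le_refl 0, one_pos⟩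
    · have := hIoo j hNpos hj; exact ⟨this.1.le, this.2⟩
  set z : Fin N → ℂ := fun j => Complex.exp (2 * Real.pi * Complex.I * θ j) with hz
  have h2πI : (2 * (Real.pi : ℂ) * Complex.I) ≠ 0 := by
    simp [Real.pi_ne_zero, Complex.I_ne_zero, Complex.ofReal_ne_zero]
  have hzinj : Function.Injective z := by
    intro i j hij
    rw [hz] at hij
    obtain ⟨n, hn⟩ := Complex.exp_eq_exp_iff_exists_int.1 hij
    have h4 : (2 * (Real.pi : ℂ) * Complex.I) * ((θ i : ℂ) - θ j)
        = (2 * (Real.pi : ℂ) * Complex.I) * n := by linear_combination hn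
    have h5 : ((θ i : ℂ) - θ j) = (n : ℂ) := mul_left_cancel₀ h2πI h4
    have h6 : θ i - θ j = (n : ℝ) := by exact_mod_cast h5
    have hi := hrange i
    have hj' := hrange j
    have hn0 : n = 0 := by
      have ha : (-1 : ℝ) < (n : ℝ) := by rw [← h6]; linarith
      have hb : ((n : ℝ)) < 1 := by rw [← h6]; linarith
      have ha' : (-1 : ℤ) < n := by exact_mod_cast ha
      have hb' : n < 1 := by exact_mod_cast hb
      omega
    have h7 : θ i = θ j := by
      rw [hn0] at h6; push_cast at h6; linarith
    exact hinj h7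
  have hzexp : ∀ j, z j = Complex.exp (((2 * Real.pi * θ j : ℝ) : ℂ) * Complex.I) := by
    intro j
    have harg : ((2 * Real.pi * θ j : ℝ) : ℂ) * Complex.I
        = 2 * (Real.pi : ℂ) * Complex.I * (θ j : ℂ) := by push_cast; ring
    rw [hz, harg]
  have habs : ∀ j, ‖z j‖ = 1 := by
    intro j; rw [hzexp j]; exact Complex.norm_exp_ofReal_mul_I _
  set B : Finset ℂ := Finset.image z Finset.univ with hB
  have hcardB : B.card = N := by
    rw [hB, Finset.card_image_of_injective _ hzinj, Finset.card_univ, Fintype.card_fin]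
  have hB0 : ∀ b ∈ B, b ≠ 0 := by
    intro b hb
    obtain ⟨j, _, rfl⟩ := Finset.mem_image.1 hb
    exact Complex.exp_ne_zero _
  have h1B : (1 : ℂ) ∈ B := by
    refine Finset.mem_image.2 ⟨⟨0, hNpos⟩, Finset.mem_univ _, ?_⟩
    rw [hz]; simp [hθ0]
  set S : Finset ℂ := B / B with hS
  have hBS : B ⊆ S := fun b hb => Finset.mem_div.2 ⟨b, hb, 1, h1B, div_one b⟩
  have h1S : (1 : ℂ) ∈ S := hBS h1B
  have hS0 : ∀ s ∈ S, s ≠ 0 := by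
    intro s hs
    obtain ⟨a, ha, b, hb, rfl⟩ := Finset.mem_div.1 hs
    exact div_ne_zero (hB0 a ha) (hB0 b hb)
  have hSinv : ∀ s ∈ S, s⁻¹ ∈ S := by
    intro s hs
    obtain ⟨a, ha, b, hb, rfl⟩ := Finset.mem_div.1 hs
    exact Finset.mem_div.2 ⟨b, hb, a, ha, by rw [inv_div]⟩
  set R : Set ℂ := {w : ℂ | ‖w‖ = 1 ∧ ∑ a ∈ A, w ^ a = 0} with hR
  have hSR : ∀ s ∈ S, s ≠ 1 → s ∈ R := by
    intro s hs hs1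
    obtain ⟨a, ha, b, hb, rfl⟩ := Finset.mem_div.1 hs
    obtain ⟨i, _, rfl⟩ := Finset.mem_image.1 ha
    obtain ⟨j, _, rfl⟩ := Finset.mem_image.1 hb
    have hij : i ≠ j := by
      rintro rfl
      exact hs1 (div_self (hB0 _ (Finset.mem_image.2 ⟨i, Finset.mem_univ _, rfl⟩)))
    have hdiv : z i / z j = Complex.exp (2 * Real.pi * Complex.I * (θ i - θ j)) := by
      rw [hz, ← Complex.exp_sub]; congr 1; push_cast; ring
    constructor
    · rw [norm_div, habs, habs, div_one]
    · rw [hdiv]; exact hspec i j hij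
  set p : ℂ[X] := ∑ a ∈ A, (X : ℂ[X]) ^ a with hp
  have hpeval : ∀ w : ℂ, p.eval w = ∑ a ∈ A, w ^ a := by
    intro w; rw [hp, Polynomial.eval_finset_sum]; simp
  have hpne : p ≠ 0 := by
    intro h
    have h2 := hpeval 2
    rw [h] at h2
    simp only [Polynomial.eval_zero] at h2
    have hc : ((∑ a ∈ A, 2 ^ a : ℕ) : ℂ) = 0 := by push_cast; rw [← h2]
    have hc' : (∑ a ∈ A, 2 ^ a : ℕ) = 0 := by exact_mod_cast hc
    have : (2 : ℕ) ^ 0 ≤ ∑ a ∈ A, 2 ^ a :=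
      Finset.single_le_sum (fun a _ => Nat.zero_le _) h0A
    omega
  have hRfin : R.Finite := by
    refine (Polynomial.finite_setOf_isRoot hpne).subset ?_
    intro w hw
    show p.IsRoot w
    rw [Polynomial.IsRoot, hpeval]
    exact hw.2
  have hcardS : 2 * S.card < 3 * N := by
    have hsub : S.erase 1 ⊆ hRfin.toFinset := by
      intro s hs
      rw [Set.Finite.mem_toFinset]
      exact hSR s (Finset.mem_erase.1 hs).2 (Finset.mem_erase.1 hs).1
    have h1 : (S.erase 1).card ≤ hRfin.toFinset.card := Finset.card_le_card hsub
    have h2 : Set.ncard R = hRfin.toFinset.card := Set.ncard_eq_toFinset_card R hRfin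
    have h3 : (S.erase 1).card = S.card - 1 := Finset.card_erase_of_mem h1S
    have h4 : 1 ≤ S.card := Finset.card_pos.2 ⟨1, h1S⟩
    omega
  have hmulS : ∀ s ∈ S, ∀ t ∈ S, s * t ∈ S := by
    intro s hs t ht
    exact freiman_mul B hB0 (by rw [hcardB]; exact hcardS) hs ht
  have hNleS : N ≤ S.card := hcardB ▸ Finset.card_le_card hBS
  have hSpos : 0 < S.card := by omega
  have hpow := pow_card_of_closed S h1S hS0 hSinv hmulS
  have hSeq : S = nthRootsFinset S.card (1 : ℂ) := eq_nthRootsFinset S hSpos hpow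
  set m := S.card with hm
  have hdvdC : (∑ i ∈ Finset.range m, (X : ℂ[X]) ^ i) ∣ p := by
    apply geom_dvd_of_roots m hSpos p hpne
    intro ζ hζm hζ1
    have hζS : ζ ∈ S := by rw [hSeq]; exact (mem_nthRootsFinset hSpos (1 : ℂ)).2 hζm
    rw [hpeval]
    exact (hSR ζ hζS hζ1).2
  have hmap1 : Polynomial.map (Int.castRingHom ℂ) (∑ i ∈ Finset.range m, (X : ℤ[X]) ^ i)
      = ∑ i ∈ Finset.range m, (X : ℂ[X]) ^ i := by
    simp [Polynomial.map_sum]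
  have hmap2 : Polynomial.map (Int.castRingHom ℂ) (∑ a ∈ A, (X : ℤ[X]) ^ a) = p := by
    rw [hp]; simp [Polynomial.map_sum]
  have hdvdZ : (∑ i ∈ Finset.range m, (X : ℤ[X]) ^ i) ∣ (∑ a ∈ A, (X : ℤ[X]) ^ a) := by
    rw [← Polynomial.map_dvd_map (Int.castRingHom ℂ) Int.cast_injective
      (monic_geom_sum_X hSpos.ne'), hmap1, hmap2]
    exact hdvdC
  have hmdvd : m ∣ N := by
    obtain ⟨q, hq⟩ := hdvdZ
    have heq := congrArg (Polynomial.eval (1 : ℤ)) hq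
    rw [Polynomial.eval_mul, Polynomial.eval_finset_sum, Polynomial.eval_finset_sum] at heq
    simp only [Polynomial.eval_pow, Polynomial.eval_X, one_pow, Finset.sum_const,
      nsmul_eq_mul, mul_one, Finset.card_range] at heq
    have : (m : ℤ) ∣ (N : ℤ) := ⟨q.eval 1, by rw [hN]; exact_mod_cast heq⟩
    exact_mod_cast this
  have hmN : m = N := le_antisymm (Nat.le_of_dvd hNpos hmdvd) hNleS
  have hBSeq : B = S := Finset.eq_of_subset_of_card_le hBS (by rw [hcardB, ← hm, hmN])
  refine ⟨?_, ?_, ?_⟩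
  · intro j
    have hjS : z j ∈ S := hBS (Finset.mem_image.2 ⟨j, Finset.mem_univ _, rfl⟩)
    have hp1 := hpow _ hjS
    rw [hmN] at hp1
    simp only [hz] at hp1
    rw [← Complex.exp_nat_mul] at hp1
    obtain ⟨n, hn⟩ := Complex.exp_eq_one_iff.1 hp1
    refine ⟨n, ?_⟩
    have h4 : (2 * (Real.pi : ℂ) * Complex.I) * ((N : ℂ) * θ j)
        = (2 * (Real.pi : ℂ) * Complex.I) * n := by linear_combination hn
    have h5 : ((N : ℝ) * θ j : ℂ) = (n : ℂ) := by
      push_cast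
      exact mul_left_cancel₀ h2πI h4
    have h6 : (N : ℝ) * θ j = n := by exact_mod_cast h5
    rw [eq_div_iff (by positivity : (N : ℝ) ≠ 0)]
    linarith
  · intro ζ hζ
    have hζS : ζ ∈ S := by
      rw [hSeq]
      exact (mem_nthRootsFinset hSpos (1 : ℂ)).2 (by rw [hmN]; exact hζ)
    rw [← hBSeq] at hζS
    obtain ⟨j, _, hj⟩ := Finset.mem_image.1 hζS
    exact ⟨j, hj.symm⟩
  · rw [← hmN]
    exact hdvdZ
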